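/- For σ > 0, the function ω ↦ (1 − e^{−ω²σ²})²/(2ω⁴σ²e^{−ω²σ²}) on (0,∞) has infimum σ²/2 as ω → 0⁺, and is strictly greater than σ²/2 for every ω > 0. -/

import Mathlib

open Filter Set

lemma lim_aux : Tendsto (fun t : ℝ => (1 - Real.exp (-t)) / t) (nhdsWithin 0 {(0:ℝ)}ᶜ) (nhds 1) := by
  have hd : HasDerivAt (fun t : ℝ => -Real.exp (-t)) 1 0 := by
    have h1 : HasDerivAt (fun t : ℝ => Real.exp (-t)) (-1) 0 := by
      have := (Real.hasDerivAt_exp (-0)).comp 0 (hasDerivAt_neg 0)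
      simpa [Function.comp_def] using this
    simpa using h1.fun_neg
  have := hasDerivAt_iff_tendsto_slope.mp hd
  refine this.congr' ?_
  filter_upwards [self_mem_nhdsWithin] with t ht
  simp [slope, ht, sub_eq_add_neg]
  ring


/-- Gaussian noise, per-sensor power constraint: the asymptotic variance
`ω ↦ (1 − e^{−ω²σ²})²/(2ω⁴σ²e^{−ω²σ²})` has infimum `σ²/2` as `ω → 0⁺`, and is
strictly greater than `σ²/2` for every `ω > 0`. -/
theorem gaussian_scale_asv_inf (σ : ℝ) (hσ : 0 < σ) :
    Tendsto (fun ω : ℝ =>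
        (1 - Real.exp (-ω^2 * σ^2))^2 / (2 * ω^4 * σ^2 * Real.exp (-ω^2 * σ^2)))
      (nhdsWithin 0 (Set.Ioi 0)) (nhds (σ^2 / 2)) ∧
    ∀ ω : ℝ, 0 < ω →
      σ^2 / 2 <
        (1 - Real.exp (-ω^2 * σ^2))^2 / (2 * ω^4 * σ^2 * Real.exp (-ω^2 * σ^2)) := by
  constructor
  · -- limit
    have hm : Tendsto (fun ω : ℝ => ω^2 * σ^2) (nhdsWithin 0 (Set.Ioi 0)) (nhdsWithin 0 {(0:ℝ)}ᶜ) := by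
      apply tendsto_nhdsWithin_of_tendsto_nhds_of_eventually_within
      · have hc : Continuous (fun ω : ℝ => ω^2 * σ^2) := by continuity
        have : Tendsto (fun ω : ℝ => ω^2 * σ^2) (nhds 0) (nhds 0) := by
          simpa using hc.tendsto (0:ℝ)
        exact this.mono_left nhdsWithin_le_nhds
      · filter_upwards [self_mem_nhdsWithin] with ω hω
        have hω' : (0:ℝ) < ω := hω
        have : (0:ℝ) < ω^2 * σ^2 := by positivity
        exact ne_of_gt this
    have hg : Tendsto (fun t : ℝ => σ^2/2 * ((1 - Real.exp (-t)) / t)^2 * Real.exp t)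
        (nhdsWithin 0 {(0:ℝ)}ᶜ) (nhds (σ^2/2)) := by
      have h1 := (lim_aux.pow 2).const_mul (σ^2/2)
      have h2 : Tendsto Real.exp (nhdsWithin 0 {(0:ℝ)}ᶜ) (nhds 1) := by
        simpa using (Real.continuous_exp.tendsto 0).mono_left nhdsWithin_le_nhds
      have := h1.mul h2
      simpa using this
    have hcomp := hg.comp hm
    refine hcomp.congr' ?_
    filter_upwards [self_mem_nhdsWithin] with ω hω
    have hω0 : (0:ℝ) < ω := hω
    have ht : (0:ℝ) < ω^2 * σ^2 := by positivity
    have he : Real.exp (-(ω^2 * σ^2)) = (Real.exp (ω^2 * σ^2))⁻¹ := Real.exp_neg _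
    simp only [Function.comp]
    rw [neg_mul] at *
    rw [he]
    have hep : (0:ℝ) < Real.exp (ω^2*σ^2) := Real.exp_pos _
    field_simp
  · intro ω hω
    have ht : (0:ℝ) < ω^2 * σ^2 := by positivity
    have hD : (0:ℝ) < 2 * ω^4 * σ^2 * Real.exp (-ω^2 * σ^2) := by positivity
    rw [lt_div_iff₀ hD]
    have h1 : (ω^2*σ^2)/2 < Real.sinh ((ω^2*σ^2)/2) := Real.self_lt_sinh_iff.mpr (by positivity)
    set a := Real.exp (-(ω^2*σ^2/2)) with ha
    have ha2 : a * a = Real.exp (-ω^2 * σ^2) := by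
      rw [ha, ← Real.exp_add]; ring_nf
    have hinv : a * Real.exp (ω^2*σ^2/2) = 1 := by
      rw [ha, ← Real.exp_add]; simp
    have hs : 2 * Real.sinh (ω^2*σ^2/2) = Real.exp (ω^2*σ^2/2) - a := by
      rw [Real.sinh_eq]; ring
    have hap : 0 < a := Real.exp_pos _
    have hsp : 0 < Real.sinh (ω^2*σ^2/2) := Real.sinh_pos_iff.mpr (by positivity)
    have hkey : 1 - Real.exp (-ω^2 * σ^2) = a * (2 * Real.sinh (ω^2*σ^2/2)) := by
      rw [hs, ← ha2]; linear_combination -hinv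
    rw [hkey, ← ha2]
    have h4 : (ω^2*σ^2)^2 < (2 * Real.sinh (ω^2*σ^2/2))^2 := by nlinarith [h1, ht, hsp]
    nlinarith [mul_lt_mul_of_pos_right h4 (mul_pos hap hap)]
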